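/- Let T be a triangle with perimeter 1, side lengths A ≤ B ≤ C, and let α be the interior angle opposite the shortest side A. Then B > 1/4 and C > 1/4, and α ≤ π/3, so that the closed disk sector of radius L = (√3)/8 and opening angle α centered at the vertex of angle α is contained in T and meets ∂T only along the two straight radial edges of the sector. -/

import Mathlib

open Real EuclideanGeometry

private lemma sector_key_ineq (A B C s t : ℝ) (hA : 0 < A) (hAB : A ≤ B) (hBC : B ≤ C)
    (hT : C ≤ A + B) (hper : A + B + C = 1) (hs : 0 ≤ s) (ht : 0 ≤ t) :
    (s + t) ^ 2 / 16 ≤ s ^ 2 * C ^ 2 + s * t * (C ^ 2 + B ^ 2 - A ^ 2) + t ^ 2 * B ^ 2 := by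
  have hB4 : 1 ≤ 4 * B := by linarith
  have hC2 : 2 * C ≤ 1 := by linarith
  have hC3 : 1 ≤ 3 * C := by linarith
  nlinarith [mul_nonneg hs ht, sq_nonneg (s * (4 * C - 1) - t * (4 * B - 1)),
    mul_nonneg (mul_nonneg hs ht) (sub_nonneg.2 hBC),
    mul_nonneg (mul_nonneg hs ht) (sub_nonneg.2 hAB),
    mul_nonneg (mul_nonneg hs ht) (by linarith : (0:ℝ) ≤ A + B - C),
    mul_nonneg (mul_nonneg hs hs) (sub_nonneg.2 hBC),
    mul_nonneg (mul_nonneg ht ht) (by linarith : (0:ℝ) ≤ 4 * B - 1),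
    sq_nonneg (s * C - t * B), sq_nonneg (B - C), sq_nonneg (s - t),
    mul_nonneg (mul_nonneg (mul_nonneg hs ht) hA.le) (by linarith : (0:ℝ) ≤ A + B - C)]

/-- Let `T` be a triangle with vertices `p, q, r`, perimeter 1, side lengths
`A = |qr| ≤ B = |pr| ≤ C = |pq|`, and let `α` be the interior angle at `p`
(opposite the shortest side `A`). Then `B > 1/4`, `C > 1/4`, `α ≤ π/3`, and the
closed disk sector of radius `L = √3/8` and opening angle `α` centered at `p`
(the intersection of the closed ball with the cone at `p` spanned by the two
adjacent sides) is contained in `T` and meets the boundary of `T` only along the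
two straight radial edges of the sector. -/
theorem triangle_sector_fits (p q r : EuclideanSpace ℝ (Fin 2))
    (hcol : ¬ Collinear ℝ ({p, q, r} : Set (EuclideanSpace ℝ (Fin 2))))
    (A B C α : ℝ) (hA : A = dist q r) (hB : B = dist p r) (hC : C = dist p q)
    (hAB : A ≤ B) (hBC : B ≤ C) (hper : A + B + C = 1)
    (hα : α = EuclideanGeometry.angle q p r) :
    1 / 4 < B ∧ 1 / 4 < C ∧ α ≤ π / 3 ∧
    (Metric.closedBall p (Real.sqrt 3 / 8) ∩
        {x | ∃ s t : ℝ, 0 ≤ s ∧ 0 ≤ t ∧ x = p + s • (q - p) + t • (r - p)})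
      ⊆ convexHull ℝ ({p, q, r} : Set (EuclideanSpace ℝ (Fin 2))) ∧
    (Metric.closedBall p (Real.sqrt 3 / 8) ∩
        {x | ∃ s t : ℝ, 0 ≤ s ∧ 0 ≤ t ∧ x = p + s • (q - p) + t • (r - p)} ∩
        frontier (convexHull ℝ ({p, q, r} : Set (EuclideanSpace ℝ (Fin 2)))))
      ⊆ segment ℝ p q ∪ segment ℝ p r := by
  have hqr : q ≠ r := by
    rintro rfl
    exact hcol (Collinear.subset (by intro x hx; simpa using hx) (collinear_pair ℝ p q))
  have hApos : 0 < A := by rw [hA]; exact dist_pos.2 hqr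
  -- nonstrict triangle inequality
  have hTle : C ≤ A + B := by
    rw [hA, hB, hC]
    calc dist p q ≤ dist p r + dist r q := dist_triangle p r q
    _ = dist q r + dist p r := by rw [dist_comm r q]; ring
  -- strict triangle inequality
  have hTlt : C < A + B := by
    rcases lt_or_eq_of_le hTle with h | h
    · exact h
    · exfalso
      have heq : dist p r + dist r q = dist p q := by
        rw [← hB, ← hC, dist_comm r q, ← hA]; linarith
      have hw : Wbtw ℝ p r q := dist_add_dist_eq_iff.1 heq
      have : Collinear ℝ ({p, r, q} : Set (EuclideanSpace ℝ (Fin 2))) := hw.collinear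
      rw [Set.pair_comm r q] at this
      exact hcol this
  have hB4 : 1 / 4 < B := by linarith
  have hC4 : 1 / 4 < C := by linarith
  -- the angle bound
  have hαle : α ≤ π / 3 := by
    have hlaw := EuclideanGeometry.law_cos q p r
    rw [← hA, dist_comm q p, ← hC, dist_comm r p, ← hB, ← hα] at hlaw
    have hBpos : (0:ℝ) < B := by linarith
    have hCpos : (0:ℝ) < C := by linarith
    have hcos : 1 / 2 ≤ Real.cos α := by
      nlinarith [hlaw, mul_pos hCpos hBpos, mul_nonneg (sub_nonneg.2 hBC) hCpos.le,
        mul_nonneg (sub_nonneg.2 hAB) (by linarith : (0:ℝ) ≤ B + A),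
        Real.neg_one_le_cos α, Real.cos_le_one α]
    by_contra h
    push_neg at h
    have h2 : Real.cos α < Real.cos (π / 3) :=
      Real.cos_lt_cos_of_nonneg_of_le_pi (by positivity) (hα ▸ EuclideanGeometry.angle_le_pi q p r) h
    rw [Real.cos_pi_div_three] at h2
    linarith
  -- vector setup
  set u : EuclideanSpace ℝ (Fin 2) := q - p with hu_def
  set v : EuclideanSpace ℝ (Fin 2) := r - p with hv_def
  have hu : ‖u‖ = C := by rw [hC, dist_eq_norm, hu_def, norm_sub_rev]
  have hv : ‖v‖ = B := by rw [hB, dist_eq_norm, hv_def, norm_sub_rev]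
  have huv : ‖u - v‖ = A := by
    have : u - v = q - r := by rw [hu_def, hv_def]; abel
    rw [this, hA, dist_eq_norm]
  have hinner : 2 * (inner ℝ u v : ℝ) = C ^ 2 + B ^ 2 - A ^ 2 := by
    have h := norm_sub_sq_real u v
    rw [hu, hv, huv] at h
    linarith
  have keynorm : ∀ s t : ℝ, 0 ≤ s → 0 ≤ t →
      ‖s • u + t • v‖ ^ 2 = s ^ 2 * C ^ 2 + s * t * (C ^ 2 + B ^ 2 - A ^ 2) + t ^ 2 * B ^ 2 := by
    intro s t hs ht
    have h := norm_add_sq_real (s • u) (t • v)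
    rw [norm_smul, norm_smul, real_inner_smul_left, real_inner_smul_right,
      Real.norm_eq_abs, Real.norm_eq_abs, abs_of_nonneg hs, abs_of_nonneg ht, hu, hv] at h
    rw [h]; linear_combination (s * t) * hinner
  have key2 : ∀ s t : ℝ, 0 ≤ s → 0 ≤ t → (s + t) ^ 2 / 16 ≤ ‖s • u + t • v‖ ^ 2 := by
    intro s t hs ht
    rw [keynorm s t hs ht]
    exact sector_key_ineq A B C s t hApos hAB hBC hTle hper hs ht
  -- anyone in the sector has s + t < 1
  have hstlt : ∀ x : EuclideanSpace ℝ (Fin 2), ∀ s t : ℝ, 0 ≤ s → 0 ≤ t →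
      x = p + s • u + t • v → dist x p ≤ Real.sqrt 3 / 8 → s + t < 1 := by
    intro x s t hs ht hx hball
    have hxp : x - p = s • u + t • v := by rw [hx]; abel
    have hd : dist x p = ‖s • u + t • v‖ := by rw [dist_eq_norm, hxp]
    have hsq : ‖s • u + t • v‖ ^ 2 ≤ 3 / 64 := by
      have h1 : ‖s • u + t • v‖ ^ 2 ≤ (Real.sqrt 3 / 8) ^ 2 := by
        apply pow_le_pow_left₀ (norm_nonneg _) _ 2
        rw [← hd]; exact hball
      have h2 : (Real.sqrt 3 / 8 : ℝ) ^ 2 = 3 / 64 := by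
        rw [div_pow, Real.sq_sqrt (by norm_num : (3:ℝ) ≥ 0)]; norm_num
      linarith
    nlinarith [key2 s t hs ht]
  -- membership in convex hull given s + t ≤ 1
  have hullmem : ∀ x : EuclideanSpace ℝ (Fin 2), ∀ s t : ℝ, 0 ≤ s → 0 ≤ t → s + t ≤ 1 →
      x = p + s • u + t • v → x ∈ convexHull ℝ ({p, q, r} : Set (EuclideanSpace ℝ (Fin 2))) := by
    intro x s t hs ht hst hx
    have hx' : x = (1 - s - t) • p + s • q + t • r := by
      rw [hx, hu_def, hv_def]; module
    rw [hx']
    have hp : p ∈ convexHull ℝ ({p, q, r} : Set (EuclideanSpace ℝ (Fin 2))) :=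
      subset_convexHull ℝ _ (by simp)
    have hq : q ∈ convexHull ℝ ({p, q, r} : Set (EuclideanSpace ℝ (Fin 2))) :=
      subset_convexHull ℝ _ (by simp)
    have hr : r ∈ convexHull ℝ ({p, q, r} : Set (EuclideanSpace ℝ (Fin 2))) :=
      subset_convexHull ℝ _ (by simp)
    have hconv := convex_convexHull ℝ ({p, q, r} : Set (EuclideanSpace ℝ (Fin 2)))
    have h3 : (1 - s - t) • p + s • q + t • r =
        ∑ i : Fin 3, (![1 - s - t, s, t] i) • (![p, q, r] i) := by
      simp [Fin.sum_univ_three]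
    rw [h3]
    apply hconv.sum_mem
    · intro i _
      fin_cases i <;> simp <;> linarith
    · simp [Fin.sum_univ_three]; ring
    · intro i _
      fin_cases i <;> [exact hp; exact hq; exact hr]
  refine ⟨hB4, hC4, hαle, ?_, ?_⟩
  · rintro x ⟨hball, s, t, hs, ht, hx⟩
    simp only [Metric.mem_closedBall] at hball
    have hst := hstlt x s t hs ht hx hball
    exact hullmem x s t hs ht hst.le hx
  · rintro x ⟨⟨hball, s, t, hs, ht, hx⟩, hfr⟩
    simp only [Metric.mem_closedBall] at hball
    have hst := hstlt x s t hs ht hx hball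
    rcases eq_or_lt_of_le ht with ht0 | htpos
    · left
      refine ⟨1 - s, s, by linarith, hs, by ring, ?_⟩
      rw [hx, ← ht0, hu_def]; module
    rcases eq_or_lt_of_le hs with hs0 | hspos
    · right
      refine ⟨1 - t, t, by linarith, ht, by ring, ?_⟩
      rw [hx, ← hs0, hv_def]; module
    -- interior case: contradiction with frontier
    exfalso
    have hai : AffineIndependent ℝ ![p, q, r] :=
      affineIndependent_iff_not_collinear_set.2 hcol
    have htop : affineSpan ℝ (Set.range ![p, q, r]) = ⊤ := by
      rw [hai.affineSpan_eq_top_iff_card_eq_finrank_add_one]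
      simp [finrank_euclideanSpace_fin]
    let b : AffineBasis (Fin 3) ℝ (EuclideanSpace ℝ (Fin 2)) := ⟨![p, q, r], hai, htop⟩
    have hrange : Set.range ⇑b = ({p, q, r} : Set (EuclideanSpace ℝ (Fin 2))) := by
      show Set.range ![p, q, r] = _
      ext y
      constructor
      · rintro ⟨i, rfl⟩; fin_cases i <;> simp
      · rintro (rfl | rfl | rfl)
        exacts [⟨0, rfl⟩, ⟨1, rfl⟩, ⟨2, rfl⟩]
    have hwsum : (Finset.univ.sum ![1 - s - t, s, t] : ℝ) = 1 := by
      simp [Fin.sum_univ_three]; ring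
    have hxcomb : x = Finset.univ.affineCombination ℝ ![p, q, r] ![1 - s - t, s, t] := by
      rw [Finset.affineCombination_eq_linear_combination _ _ _ hwsum]
      rw [hx, hu_def, hv_def]
      simp [Fin.sum_univ_three]
      module
    have hint : x ∈ interior (convexHull ℝ ({p, q, r} : Set (EuclideanSpace ℝ (Fin 2)))) := by
      rw [← hrange, b.interior_convexHull]
      intro i
      have hcoord : b.coord i x = ![1 - s - t, s, t] i := by
        rw [hxcomb]
        exact b.coord_apply_combination_of_mem (Finset.mem_univ i) hwsum
      rw [hcoord]
      fin_cases i <;> simp <;> linarith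
    exact hfr.2 hint
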